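/- Suppose a finite group G acts line-transitively on a finite regular linear space S, B is a normal subgroup of G of prime index t which is not line-transitive on S, and B is not point-transitive on S. Then every prime dividing the number b of lines also divides the number v of points; in particular (v−1, b) has no prime divisors, so S is a projective plane (b = v). -/

import Mathlib

/-- A finite regular linear space: a finite point set `P`, a set of lines
(each a finset of points), such that every line has exactly `k` points,
every point lies on exactly `r` lines, and any two distinct points lie on
exactly one common line. -/
structure RegularLinearSpace (P : Type*) [Fintype P] [DecidableEq P] where
  lines : Finset (Finset P)
  k : ℕ
  r : ℕ
  two_le_k : 2 ≤ k
  line_card : ∀ L ∈ lines, L.card = k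
  point_deg : ∀ p : P, (lines.filter (fun L => p ∈ L)).card = r
  exists_unique_line : ∀ p q : P, p ≠ q → ∃! L, L ∈ lines ∧ p ∈ L ∧ q ∈ L

namespace RLSAux

variable {P : Type*} [Fintype P] [DecidableEq P]

lemma line_filter_card_one (S : RegularLinearSpace P) {p q : P} (hpq : p ≠ q) :
    (S.lines.filter (fun L => p ∈ L ∧ q ∈ L)).card = 1 := by
  obtain ⟨L₀, h₀, hu⟩ := S.exists_unique_line p q hpq
  rw [Finset.card_eq_one]
  refine ⟨L₀, ?_⟩
  ext L
  simp only [Finset.mem_filter, Finset.mem_singleton]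
  constructor
  · rintro ⟨hL, h1, h2⟩; exact hu L ⟨hL, h1, h2⟩
  · rintro rfl; exact ⟨h₀.1, h₀.2.1, h₀.2.2⟩

lemma count1 (S : RegularLinearSpace P) (p : P) :
    S.r * (S.k - 1) = Fintype.card P - 1 := by
  classical
  have hou : (S.lines.filter (fun L => p ∈ L)).biUnion (fun L => L.erase p)
      = Finset.univ.erase p := by
    ext q
    simp only [Finset.mem_biUnion, Finset.mem_filter, Finset.mem_erase, Finset.mem_univ, and_true]
    constructor
    · rintro ⟨L, ⟨hL, hpL⟩, hqp, hqL⟩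
      exact hqp
    · intro hqp
      obtain ⟨L, ⟨hL, hpL, hqL⟩, -⟩ := S.exists_unique_line p q (Ne.symm hqp)
      exact ⟨L, ⟨hL, hpL⟩, hqp, hqL⟩
  have hdisj : ∀ L₁ ∈ S.lines.filter (fun L => p ∈ L), ∀ L₂ ∈ S.lines.filter (fun L => p ∈ L),
      L₁ ≠ L₂ → Disjoint (L₁.erase p) (L₂.erase p) := by
    intro L₁ h₁ L₂ h₂ hne
    simp only [Finset.mem_filter] at h₁ h₂
    rw [Finset.disjoint_left]
    intro q hq1 hq2
    rw [Finset.mem_erase] at hq1 hq2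
    obtain ⟨L₀, -, hu⟩ := S.exists_unique_line p q (Ne.symm hq1.1)
    exact hne ((hu L₁ ⟨h₁.1, h₁.2, hq1.2⟩).trans (hu L₂ ⟨h₂.1, h₂.2, hq2.2⟩).symm)
  have hcard := Finset.card_biUnion hdisj
  rw [hou, Finset.card_erase_of_mem (Finset.mem_univ p), Finset.card_univ] at hcard
  rw [hcard]
  calc S.r * (S.k - 1)
      = ∑ _L ∈ S.lines.filter (fun L => p ∈ L), (S.k - 1) := by
        rw [Finset.sum_const, smul_eq_mul, S.point_deg p]
    _ = ∑ L ∈ S.lines.filter (fun L => p ∈ L), (L.erase p).card :=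
        Finset.sum_congr rfl (fun L hL => by
          simp only [Finset.mem_filter] at hL
          rw [Finset.card_erase_of_mem hL.2, S.line_card L hL.1])

lemma count3 (S : RegularLinearSpace P) (A : Finset P) :
    ∑ L ∈ S.lines, (A.filter (fun p => p ∈ L)).card = A.card * S.r := by
  simp_rw [Finset.card_filter]
  rw [Finset.sum_comm]
  rw [Finset.sum_congr rfl (fun p _ => by
    rw [← Finset.card_filter, S.point_deg p])]
  rw [Finset.sum_const, smul_eq_mul]

lemma count2 (S : RegularLinearSpace P) :
    S.lines.card * S.k = Fintype.card P * S.r := by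
  have h := count3 S Finset.univ
  rw [Finset.card_univ] at h
  calc S.lines.card * S.k
      = ∑ _L ∈ S.lines, S.k := by rw [Finset.sum_const, smul_eq_mul]
    _ = ∑ L ∈ S.lines, (Finset.filter (fun p => p ∈ L) Finset.univ).card :=
        Finset.sum_congr rfl (fun L hL => by
          rw [Finset.filter_univ_mem, S.line_card L hL])
    _ = Fintype.card P * S.r := h

lemma count4 (S : RegularLinearSpace P) (A₁ A₂ : Finset P) (hd : Disjoint A₁ A₂) :
    ∑ L ∈ S.lines, (A₁.filter (fun p => p ∈ L)).card * (A₂.filter (fun p => p ∈ L)).card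
      = A₁.card * A₂.card := by
  have key : ∀ L : Finset P, (A₁.filter (fun p => p ∈ L)).card * (A₂.filter (fun p => p ∈ L)).card
      = ∑ p ∈ A₁, ∑ q ∈ A₂, if p ∈ L ∧ q ∈ L then 1 else 0 := by
    intro L
    rw [Finset.card_filter, Finset.card_filter, Finset.sum_mul_sum]
    apply Finset.sum_congr rfl
    intro p _
    apply Finset.sum_congr rfl
    intro q _
    by_cases h1 : p ∈ L <;> by_cases h2 : q ∈ L <;> simp [h1, h2]
  calc ∑ L ∈ S.lines, (A₁.filter (fun p => p ∈ L)).card * (A₂.filter (fun p => p ∈ L)).card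
      = ∑ L ∈ S.lines, ∑ p ∈ A₁, ∑ q ∈ A₂, (if p ∈ L ∧ q ∈ L then 1 else 0) :=
        Finset.sum_congr rfl (fun L _ => key L)
    _ = ∑ p ∈ A₁, ∑ L ∈ S.lines, ∑ q ∈ A₂, (if p ∈ L ∧ q ∈ L then 1 else 0) :=
        Finset.sum_comm
    _ = ∑ p ∈ A₁, ∑ q ∈ A₂, ∑ L ∈ S.lines, (if p ∈ L ∧ q ∈ L then 1 else 0) :=
        Finset.sum_congr rfl (fun p _ => Finset.sum_comm)
    _ = ∑ _p ∈ A₁, ∑ _q ∈ A₂, 1 :=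
        Finset.sum_congr rfl (fun p hp => Finset.sum_congr rfl (fun q hq => by
          rw [← Finset.card_filter]
          exact line_filter_card_one S (fun h => (Finset.disjoint_left.1 hd) hp (h ▸ hq))))
    _ = A₁.card * A₂.card := by simp [mul_comm]

end RLSAux

open Pointwise MulAction in
/-- If `G` acts line-transitively on a finite regular linear space `S`, and
`B` is a normal subgroup of prime index which is neither line-transitive nor
point-transitive on `S`, then every prime dividing `b` divides `v`, and `S`
is a projective plane, i.e. `b = v`. -/
theorem stmt_17 {P G : Type*} [Fintype P] [DecidableEq P]
    [Group G] [Fintype G] [MulAction G P]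
    (S : RegularLinearSpace P)
    (hpres : ∀ (g : G), ∀ L ∈ S.lines, Finset.image (g • ·) L ∈ S.lines)
    (htrans : ∀ L ∈ S.lines, ∀ L' ∈ S.lines,
      ∃ g : G, Finset.image (g • ·) L = L')
    (B : Subgroup G) (hBnormal : B.Normal)
    (t : ℕ) (ht : t.Prime) (hindex : B.index = t)
    (hBnotline : ¬ ∀ L ∈ S.lines, ∀ L' ∈ S.lines,
      ∃ g ∈ B, Finset.image (g • ·) L = L')
    (hBnotpoint : ¬ ∀ p q : P, ∃ g ∈ B, g • p = q) :
    (∀ p : ℕ, p.Prime → p ∣ S.lines.card → p ∣ Fintype.card P) ∧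
    S.lines.card = Fintype.card P := by
  classical
  haveI := hBnormal
  -- basic sizes
  have hv2 : 2 ≤ Fintype.card P := by
    by_contra h
    push_neg at h
    have hsub : ∀ a b : P, a = b := Fintype.card_le_one_iff.1 (by omega)
    exact hBnotpoint (fun p q => ⟨1, B.one_mem, by rw [one_smul]; exact hsub p q⟩)
  have hb2 : 2 ≤ S.lines.card := by
    by_contra h
    push_neg at h
    have hone : ∀ L ∈ S.lines, ∀ L' ∈ S.lines, L = L' :=
      Finset.card_le_one.1 (by omega)
    refine hBnotline (fun L hL L' hL' => ⟨1, B.one_mem, ?_⟩)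
    have : Finset.image ((1 : G) • ·) L = L := by simp
    rw [this]; exact hone L hL L' hL'
  obtain ⟨x₀, y₀, hx₀y₀⟩ := Fintype.exists_pair_of_one_lt_card (by omega : 1 < Fintype.card P)
  obtain ⟨L₀, ⟨hL₀, -, -⟩, -⟩ := S.exists_unique_line x₀ y₀ hx₀y₀
  have hr1 : 1 ≤ S.r := by
    by_contra h
    push_neg at h
    have hcnt := RLSAux.count1 S x₀
    have h0 : S.r = 0 := by omega
    rw [h0, Nat.zero_mul] at hcnt
    omega
  -- Block's argument: G is point-transitive
  have hGtrans : ∀ x y : P, ∃ g : G, g • x = y := by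
    by_contra hc
    push_neg at hc
    obtain ⟨x, y, hxy⟩ := hc
    set O : P → Finset P := fun z => Finset.image (fun g : G => g • z) Finset.univ with hO
    have hmemO : ∀ z w : P, w ∈ O z ↔ ∃ g : G, g • z = w := by
      intro z w; simp [hO]
    have hself : ∀ z, z ∈ O z := fun z => (hmemO z z).2 ⟨1, one_smul _ _⟩
    have hdisj : Disjoint (O x) (O y) := by
      rw [Finset.disjoint_left]
      intro w hwx hwy
      obtain ⟨g, hg⟩ := (hmemO x w).1 hwx
      obtain ⟨h, hh⟩ := (hmemO y w).1 hwy
      exact hxy (h⁻¹ * g) (by rw [mul_smul, hg, ← hh, inv_smul_smul])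
    have hconst : ∀ z : P, ∀ L ∈ S.lines, ∀ L' ∈ S.lines,
        ((O z).filter (fun p => p ∈ L)).card = ((O z).filter (fun p => p ∈ L')).card := by
      intro z L hL L' hL'
      obtain ⟨g, hg⟩ := htrans L hL L' hL'
      have himg : Finset.image (g • ·) ((O z).filter (fun p => p ∈ L))
          = (O z).filter (fun p => p ∈ L') := by
        ext w
        simp only [Finset.mem_image, Finset.mem_filter]
        constructor
        · rintro ⟨u, ⟨huO, huL⟩, rfl⟩
          constructor
          · obtain ⟨a, ha⟩ := (hmemO z u).1 huO
            exact (hmemO z _).2 ⟨g * a, by rw [mul_smul, ha]⟩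
          · rw [← hg]
            exact Finset.mem_image_of_mem _ huL
        · rintro ⟨hwO, hwL'⟩
          refine ⟨g⁻¹ • w, ⟨?_, ?_⟩, smul_inv_smul g w⟩
          · obtain ⟨a, ha⟩ := (hmemO z w).1 hwO
            exact (hmemO z _).2 ⟨g⁻¹ * a, by rw [mul_smul, ha]⟩
          · rw [← hg] at hwL'
            obtain ⟨u, huL, hu⟩ := Finset.mem_image.1 hwL'
            rwa [show u = g⁻¹ • w by rw [← hu, inv_smul_smul]] at huL
      rw [← himg, Finset.card_image_of_injective _ (MulAction.injective g)]
    set c1 := ((O x).filter (fun p => p ∈ L₀)).card with hc1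
    set c2 := ((O y).filter (fun p => p ∈ L₀)).card with hc2
    have h1 : S.lines.card * c1 = (O x).card * S.r := by
      have h := RLSAux.count3 S (O x)
      rw [Finset.sum_congr rfl (fun L hL => hconst x L hL L₀ hL₀)] at h
      rw [Finset.sum_const, smul_eq_mul] at h
      exact h
    have h2 : S.lines.card * c2 = (O y).card * S.r := by
      have h := RLSAux.count3 S (O y)
      rw [Finset.sum_congr rfl (fun L hL => hconst y L hL L₀ hL₀)] at h
      rw [Finset.sum_const, smul_eq_mul] at h
      exact h
    have h12 : S.lines.card * (c1 * c2) = (O x).card * (O y).card := by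
      have h := RLSAux.count4 S (O x) (O y) hdisj
      rw [Finset.sum_congr rfl (fun L hL => by
        rw [hconst x L hL L₀ hL₀, hconst y L hL L₀ hL₀])] at h
      rw [Finset.sum_const, smul_eq_mul] at h
      exact h
    have hOx : 0 < (O x).card := Finset.card_pos.2 ⟨x, hself x⟩
    have hOy : 0 < (O y).card := Finset.card_pos.2 ⟨y, hself y⟩
    have hr2 : (O x).card * (O y).card * (S.r * S.r)
        = (O x).card * (O y).card * S.lines.card := by
      calc (O x).card * (O y).card * (S.r * S.r)
          = ((O x).card * S.r) * ((O y).card * S.r) := by ring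
        _ = (S.lines.card * c1) * (S.lines.card * c2) := by rw [h1, h2]
        _ = S.lines.card * (S.lines.card * (c1 * c2)) := by ring
        _ = S.lines.card * ((O x).card * (O y).card) := by rw [h12]
        _ = (O x).card * (O y).card * S.lines.card := by ring
    have hb_eq : S.r * S.r = S.lines.card :=
      Nat.eq_of_mul_eq_mul_left (Nat.mul_pos hOx hOy) hr2
    -- now get a contradiction with hb2
    have hbk := RLSAux.count2 S
    have hrk := RLSAux.count1 S x
    set m := S.k - 1 with hm
    have hkm : S.k = m + 1 := by have := S.two_le_k; omega
    have hvrk : Fintype.card P = S.r * S.k := by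
      have : S.r * (S.r * S.k) = S.r * Fintype.card P := by
        calc S.r * (S.r * S.k) = (S.r * S.r) * S.k := by ring
          _ = S.lines.card * S.k := by rw [hb_eq]
          _ = Fintype.card P * S.r := hbk
          _ = S.r * Fintype.card P := by ring
      exact (Nat.eq_of_mul_eq_mul_left (by omega) this).symm
    rw [hkm] at hvrk
    have hexp : S.r * (m + 1) = S.r * m + S.r := by ring
    -- hrk : S.r * m = Fintype.card P - 1, hvrk : card = S.r * (m+1)
    have : S.r = 1 := by omega
    rw [this] at hb_eq
    omega
  letI : MulAction.IsPretransitive G P := ⟨hGtrans⟩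
  -- the type of lines with its G-action
  letI lineAct : MulAction G {L : Finset P // L ∈ S.lines} :=
    { smul := fun g L => ⟨Finset.image (g • ·) L.1, hpres g L.1 L.2⟩
      one_smul := fun L => Subtype.ext (by
        show Finset.image ((1 : G) • ·) L.1 = L.1
        simp)
      mul_smul := fun g h L => Subtype.ext (by
        show Finset.image ((g * h) • ·) L.1
            = Finset.image (g • ·) (Finset.image (h • ·) L.1)
        rw [Finset.image_image]
        exact Finset.image_congr (fun x _ => mul_smul g h x)) }
  have hsmul_coe : ∀ (g : G) (L : {L : Finset P // L ∈ S.lines}),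
      (g • L).1 = Finset.image (g • ·) L.1 := fun _ _ => rfl
  letI : MulAction.IsPretransitive G {L : Finset P // L ∈ S.lines} := by
    constructor
    intro L L'
    obtain ⟨g, hg⟩ := htrans L.1 L.2 L'.1 L'.2
    exact ⟨g, Subtype.ext hg⟩
  have hcardLT : Nat.card {L : Finset P // L ∈ S.lines} = S.lines.card := by
    rw [Nat.card_eq_fintype_card]
    exact Fintype.card_coe S.lines
  -- stabilizers of lines are contained in B
  have hstabLle : ∀ Lt : {L : Finset P // L ∈ S.lines}, MulAction.stabilizer G Lt ≤ B := by
    intro Lt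
    have hdvd : (B ⊔ MulAction.stabilizer G Lt).index ∣ t :=
      hindex ▸ Subgroup.index_dvd_of_le le_sup_left
    rcases Nat.Prime.eq_one_or_self_of_dvd ht _ hdvd with hcase | hcase
    · -- sup = ⊤ : contradiction with hBnotline
      exfalso
      have hK : B ⊔ MulAction.stabilizer G Lt = ⊤ := Subgroup.index_eq_one.1 hcase
      apply hBnotline
      have key : ∀ L'' ∈ S.lines, ∃ n ∈ B, Finset.image (n • ·) Lt.1 = L'' := by
        intro L'' h''
        obtain ⟨g, hg⟩ := htrans Lt.1 Lt.2 L'' h''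
        have hgmem : g ∈ ((B : Set G) * (MulAction.stabilizer G Lt : Set G)) := by
          rw [← Subgroup.normal_mul, hK]
          trivial
        rw [Set.mem_mul] at hgmem
        obtain ⟨n, hn, u, hu, hnu⟩ := hgmem
        refine ⟨n, hn, ?_⟩
        have hu' : Finset.image (u • ·) Lt.1 = Lt.1 :=
          congrArg Subtype.val (MulAction.mem_stabilizer_iff.1 hu)
        calc Finset.image (n • ·) Lt.1
            = Finset.image (n • ·) (Finset.image (u • ·) Lt.1) := by rw [hu']
          _ = Finset.image ((n * u) • ·) Lt.1 := by
              rw [Finset.image_image]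
              exact (Finset.image_congr (fun z _ => mul_smul n u z)).symm
          _ = L'' := by rw [hnu]; exact hg
      intro L hL L' hL'
      obtain ⟨n1, hn1, h1⟩ := key L hL
      obtain ⟨n2, hn2, h2⟩ := key L' hL'
      refine ⟨n2 * n1⁻¹, mul_mem hn2 (inv_mem hn1), ?_⟩
      rw [← h1, Finset.image_image]
      rw [show ((n2 * n1⁻¹) • ·) ∘ (n1 • ·) = ((n2 : G) • ·) from funext fun z => by
        simp [← mul_smul, mul_assoc]]
      exact h2
    · -- index = t : then sup ≤ B
      have hrel : B.relIndex (B ⊔ MulAction.stabilizer G Lt) * t = 1 * t := by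
        rw [one_mul, ← hcase, Subgroup.relIndex_mul_index le_sup_left, hindex, hcase]
      have hone : B.relIndex (B ⊔ MulAction.stabilizer G Lt) = 1 :=
        Nat.eq_of_mul_eq_mul_right ht.pos hrel
      exact le_sup_right.trans (Subgroup.relIndex_eq_one.1 hone)
  -- stabilizers of points are contained in B
  have hstabPle : ∀ x : P, MulAction.stabilizer G x ≤ B := by
    intro x
    have hdvd : (B ⊔ MulAction.stabilizer G x).index ∣ t :=
      hindex ▸ Subgroup.index_dvd_of_le le_sup_left
    rcases Nat.Prime.eq_one_or_self_of_dvd ht _ hdvd with hcase | hcase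
    · exfalso
      have hK : B ⊔ MulAction.stabilizer G x = ⊤ := Subgroup.index_eq_one.1 hcase
      apply hBnotpoint
      have key : ∀ yy : P, ∃ n ∈ B, n • x = yy := by
        intro yy
        obtain ⟨g, hg⟩ := hGtrans x yy
        have hgmem : g ∈ ((B : Set G) * (MulAction.stabilizer G x : Set G)) := by
          rw [← Subgroup.normal_mul, hK]
          trivial
        rw [Set.mem_mul] at hgmem
        obtain ⟨n, hn, u, hu, hnu⟩ := hgmem
        refine ⟨n, hn, ?_⟩
        have hu' : u • x = x := hu
        rw [← hg, ← hnu, mul_smul, hu']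
      intro p q
      obtain ⟨n1, hn1, h1⟩ := key p
      obtain ⟨n2, hn2, h2⟩ := key q
      refine ⟨n2 * n1⁻¹, mul_mem hn2 (inv_mem hn1), ?_⟩
      rw [← h1, ← mul_smul, mul_assoc, inv_mul_cancel, mul_one, h2]
    · have hrel : B.relIndex (B ⊔ MulAction.stabilizer G x) * t = 1 * t := by
        rw [one_mul, ← hcase, Subgroup.relIndex_mul_index le_sup_left, hindex, hcase]
      have hone : B.relIndex (B ⊔ MulAction.stabilizer G x) = 1 :=
        Nat.eq_of_mul_eq_mul_right ht.pos hrel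
      exact le_sup_right.trans (Subgroup.relIndex_eq_one.1 hone)
  -- index identities
  have hb_idx : ∀ Lt : {L : Finset P // L ∈ S.lines},
      (MulAction.stabilizer G Lt).relIndex B * t = S.lines.card := by
    intro Lt
    rw [← hindex, Subgroup.relIndex_mul_index (hstabLle Lt),
      MulAction.index_stabilizer_of_transitive, hcardLT]
  have hv_idx : ∀ x : P, (MulAction.stabilizer G x).relIndex B * t = Fintype.card P := by
    intro x
    rw [← hindex, Subgroup.relIndex_mul_index (hstabPle x),
      MulAction.index_stabilizer_of_transitive, Nat.card_eq_fintype_card]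
  have htv : t ∣ Fintype.card P :=
    ⟨(MulAction.stabilizer G x₀).relIndex B, by rw [← hv_idx x₀]; ring⟩
  -- Part (1): every prime dividing b divides v
  have hmain : ∀ s : ℕ, s.Prime → s ∣ S.lines.card → s ∣ Fintype.card P := by
    intro s hs hsb
    by_contra hsv
    haveI hfact := Fact.mk hs
    have hst : s ≠ t := by
      rintro rfl
      exact hsv htv
    have hsL : ∀ Lt : {L : Finset P // L ∈ S.lines},
        s ∣ (MulAction.stabilizer (↥B) Lt).index := by
      intro Lt
      have h1 : MulAction.stabilizer (↥B) Lt = (MulAction.stabilizer G Lt).subgroupOf B := by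
        ext g; rfl
      rw [h1]
      have h3 : s ∣ (MulAction.stabilizer G Lt).relIndex B * t := by
        rw [hb_idx Lt]; exact hsb
      rcases (Nat.Prime.dvd_mul hs).1 h3 with h | h
      · exact h
      · exact absurd ((Nat.prime_dvd_prime_iff_eq hs ht).1 h) hst
    obtain ⟨Q⟩ : Nonempty (Sylow s ↥B) := Sylow.nonempty
    haveI : (Q : Subgroup ↥B).FiniteIndex := ⟨Subgroup.index_ne_zero_of_finite⟩
    have hnofix : ∀ Lt : {L : Finset P // L ∈ S.lines},
        ¬ (Q : Subgroup ↥B) ≤ MulAction.stabilizer (↥B) Lt := by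
      intro Lt hle
      exact Q.not_dvd_index ((hsL Lt).trans (Subgroup.index_dvd_of_le hle))
    have hfix : ∀ z : P, ∃ w ∈ MulAction.orbit (↥B) z,
        ∀ q : ↥(Q : Subgroup ↥B), ((q : ↥B) : G) • w = w := by
      intro z
      have hcardorb : ¬ s ∣ Nat.card ↥(MulAction.orbit (↥B) z) := by
        rw [Nat.card_coe_set_eq, ← MulAction.index_stabilizer]
        have e : MulAction.stabilizer (↥B) z = (MulAction.stabilizer G z).subgroupOf B := by
          ext g; rfl
        rw [e]
        intro hdvd
        exact hsv (hdvd.trans ⟨t, (hv_idx z).symm⟩)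
      obtain ⟨⟨w, hw⟩, hwfix⟩ :=
        Q.isPGroup'.nonempty_fixed_point_of_prime_not_dvd_card _ hcardorb
      refine ⟨w, hw, fun q => ?_⟩
      exact congrArg Subtype.val (MulAction.mem_fixedPoints.1 hwfix q)
    push_neg at hBnotpoint
    obtain ⟨p0, q0, hp0q0⟩ := hBnotpoint
    obtain ⟨z1, hz1, hz1fix⟩ := hfix p0
    obtain ⟨z2, hz2, hz2fix⟩ := hfix q0
    have hz12 : z1 ≠ z2 := by
      rintro rfl
      obtain ⟨c, hc⟩ := MulAction.mem_orbit_iff.1 hz1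
      obtain ⟨d, hd⟩ := MulAction.mem_orbit_iff.1 hz2
      refine hp0q0 ↑(d⁻¹ * c) (d⁻¹ * c).2 ?_
      show ((d⁻¹ * c : ↥B) : G) • p0 = q0
      show (d⁻¹ * c : ↥B) • p0 = q0
      rw [mul_smul, hc, ← hd, inv_smul_smul]
    obtain ⟨L, ⟨hL, hz1L, hz2L⟩, huniq⟩ := S.exists_unique_line z1 z2 hz12
    apply hnofix ⟨L, hL⟩
    intro q hq
    rw [MulAction.mem_stabilizer_iff]
    apply Subtype.ext
    show Finset.image ((q : G) • ·) L = L
    apply huniq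
    refine ⟨hpres _ _ hL, ?_, ?_⟩
    · exact Finset.mem_image.2 ⟨z1, hz1L, hz1fix ⟨q, hq⟩⟩
    · exact Finset.mem_image.2 ⟨z2, hz2L, hz2fix ⟨q, hq⟩⟩
  -- Part (2): S is a projective plane
  have hbk := RLSAux.count2 S
  have hrk := RLSAux.count1 S x₀
  have hkr : S.k ≤ S.r := by
    by_cases hall : ∀ z : P, z ∈ L₀
    · exfalso
      have huniq : ∀ L' ∈ S.lines, L' = L₀ := by
        intro L' hL'
        have hcard : 2 ≤ L'.card := by rw [S.line_card L' hL']; exact S.two_le_k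
        obtain ⟨a, ha, b', hb', hab⟩ := Finset.one_lt_card.1 hcard
        obtain ⟨M, -, hMu⟩ := S.exists_unique_line a b' hab
        exact (hMu L' ⟨hL', ha, hb'⟩).trans (hMu L₀ ⟨hL₀, hall a, hall b'⟩).symm
      have : S.lines.card ≤ 1 :=
        Finset.card_le_one.2 (fun a ha b hb => (huniq a ha).trans (huniq b hb).symm)
      omega
    · push_neg at hall
      obtain ⟨x, hx⟩ := hall
      set f : P → Finset P := fun p =>
        if h : x ≠ p then (S.exists_unique_line x p h).choose else ∅ with hf
      have hfspec : ∀ p : P, ∀ h : x ≠ p, f p ∈ S.lines ∧ x ∈ f p ∧ p ∈ f p := by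
        intro p h
        rw [hf]
        simp only [dif_pos h]
        exact (S.exists_unique_line x p h).choose_spec.1
      have hxje : ∀ p ∈ L₀, x ≠ p := fun p hp h => hx (h ▸ hp)
      have hmaps : ∀ p ∈ L₀, f p ∈ S.lines.filter (fun L => x ∈ L) := by
        intro p hp
        obtain ⟨h1, h2, -⟩ := hfspec p (hxje p hp)
        exact Finset.mem_filter.2 ⟨h1, h2⟩
      have hinj : ∀ p ∈ L₀, ∀ p' ∈ L₀, f p = f p' → p = p' := by
        intro p hp p' hp' heq
        by_contra hne
        obtain ⟨M, -, hMu⟩ := S.exists_unique_line p p' hne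
        obtain ⟨h1, h2, h3⟩ := hfspec p (hxje p hp)
        obtain ⟨h1', h2', h3'⟩ := hfspec p' (hxje p' hp')
        have hfpL : f p = L₀ := by
          have e1 : f p = M := hMu (f p) ⟨h1, h3, heq ▸ h3'⟩
          have e2 : L₀ = M := hMu L₀ ⟨hL₀, hp, hp'⟩
          rw [e1, ← e2]
        exact hx (hfpL ▸ h2)
      have hle := Finset.card_le_card_of_injOn f hmaps hinj
      rw [S.line_card L₀ hL₀, S.point_deg x] at hle
      exact hle
  have hvb : Fintype.card P ≤ S.lines.card := by
    have h1 : Fintype.card P * S.k ≤ Fintype.card P * S.r := Nat.mul_le_mul_left _ hkr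
    rw [← hbk] at h1
    have hkpos : 0 < S.k := by have := S.two_le_k; omega
    exact Nat.le_of_mul_le_mul_right h1 hkpos
  have hco : Nat.Coprime S.lines.card (Fintype.card P - 1) := by
    by_contra hnc
    obtain ⟨p, hp, hpb, hpv1⟩ := Nat.Prime.not_coprime_iff_dvd.1 hnc
    have hpv := hmain p hp hpb
    have hone : p ∣ 1 := by
      have h := Nat.dvd_sub hpv hpv1
      rwa [show Fintype.card P - (Fintype.card P - 1) = 1 by omega] at h
    exact hp.one_lt.ne' (Nat.dvd_one.1 hone)
  have hident : S.lines.card * (S.k * (S.k - 1))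
      = Fintype.card P * (Fintype.card P - 1) := by
    calc S.lines.card * (S.k * (S.k - 1))
        = (S.lines.card * S.k) * (S.k - 1) := by ring
      _ = (Fintype.card P * S.r) * (S.k - 1) := by rw [hbk]
      _ = Fintype.card P * (S.r * (S.k - 1)) := by ring
      _ = Fintype.card P * (Fintype.card P - 1) := by rw [hrk]
  have hdvd : S.lines.card ∣ Fintype.card P :=
    Nat.Coprime.dvd_of_dvd_mul_right hco ⟨S.k * (S.k - 1), hident.symm⟩
  exact ⟨hmain, Nat.le_antisymm (Nat.le_of_dvd (by omega) hdvd) hvb⟩
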